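/- arXiv:2509.25650 — 4 statements merged into one kernel-verified Lean document; each statement's English description precedes it below -/
import Mathlib

section
/- Let p ≥ 1 be real, w, z ∈ ℂ, and q₀ ≥ 0. Then | |w + z|^{2p} − q₀^{2p} | ≤ 4p (|w| + |z| + q₀)^{2p−1} (|w| + | |z| − q₀ |). -/
open Real

lemma rpow_sub_rpow_le_aux {q x y : ℝ} (hq : 1 ≤ q) (hx : 0 ≤ x) (hxy : x ≤ y) :
    y ^ q - x ^ q ≤ q * y ^ (q - 1) * (y - x) := by
  rcases eq_or_lt_of_le hxy with rfl | hlt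
  · simp
  have hy : 0 ≤ y := hx.trans hxy
  obtain ⟨c, hc, hderiv⟩ := exists_hasDerivAt_eq_slope (fun t => t ^ q)
      (fun t => q * t ^ (q - 1)) hlt
      (by
        apply ContinuousOn.rpow_const continuousOn_id
        intro t ht
        exact Or.inr (by linarith))
      (fun t ht => by
        have := Real.hasDerivAt_rpow_const (x := t) (p := q) (Or.inr hq)
        simpa [mul_comm] using this)
  have hc0 : 0 ≤ c := le_of_lt (lt_of_le_of_lt hx hc.1)
  have hle : q * c ^ (q - 1) ≤ q * y ^ (q - 1) := by
    apply mul_le_mul_of_nonneg_left _ (by linarith)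
    exact Real.rpow_le_rpow hc0 (le_of_lt hc.2) (by linarith)
  have : (y ^ q - x ^ q) / (y - x) ≤ q * y ^ (q - 1) := hderiv ▸ hle
  calc y ^ q - x ^ q = (y ^ q - x ^ q) / (y - x) * (y - x) := by
        rw [div_mul_cancel₀]; exact ne_of_gt (by linarith)
    _ ≤ q * y ^ (q - 1) * (y - x) := by
        apply mul_le_mul_of_nonneg_right this (by linarith)

lemma abs_rpow_sub_rpow_le {q x y M : ℝ} (hq : 1 ≤ q) (hx : 0 ≤ x) (hy : 0 ≤ y)
    (hxM : x ≤ M) (hyM : y ≤ M) :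
    |x ^ q - y ^ q| ≤ q * M ^ (q - 1) * |x - y| := by
  have hM : 0 ≤ M := hx.trans hxM
  rcases le_total x y with h | h
  · rw [abs_sub_comm, abs_of_nonneg (sub_nonneg.2 (Real.rpow_le_rpow hx h (by linarith))),
      abs_sub_comm, abs_of_nonneg (sub_nonneg.2 h)]
    calc y ^ q - x ^ q ≤ q * y ^ (q - 1) * (y - x) := rpow_sub_rpow_le_aux hq hx h
      _ ≤ q * M ^ (q - 1) * (y - x) := by
          apply mul_le_mul_of_nonneg_right _ (by linarith)
          exact mul_le_mul_of_nonneg_left (Real.rpow_le_rpow hy hyM (by linarith)) (by linarith)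
  · rw [abs_of_nonneg (sub_nonneg.2 (Real.rpow_le_rpow hy h (by linarith))),
      abs_of_nonneg (sub_nonneg.2 h)]
    calc x ^ q - y ^ q ≤ q * x ^ (q - 1) * (x - y) := rpow_sub_rpow_le_aux hq hy h
      _ ≤ q * M ^ (q - 1) * (x - y) := by
          apply mul_le_mul_of_nonneg_right _ (by linarith)
          exact mul_le_mul_of_nonneg_left (Real.rpow_le_rpow hx hxM (by linarith)) (by linarith)

/-- | |w+z|^{2p} − q₀^{2p} | ≤ 4p (|w|+|z|+q₀)^{2p−1} (|w| + | |z| − q₀ |), p ≥ 1. -/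
theorem pow2p_abs_diff_bound (p : ℝ) (hp : 1 ≤ p) (w z : ℂ) (q0 : ℝ) (hq0 : 0 ≤ q0) :
    |(‖w + z‖ ^ 2) ^ p - (q0 ^ 2) ^ p| ≤
      4 * p * (‖w‖ + ‖z‖ + q0) ^ (2 * p - 1) *
        (‖w‖ + |‖z‖ - q0|) := by
  set a := ‖w + z‖ with ha
  set M := ‖w‖ + ‖z‖ + q0 with hM
  have ha0 : 0 ≤ a := norm_nonneg _
  have haM : a ≤ M := by
    have := norm_add_le w z
    simp only [hM]; linarith
  have hq0M : q0 ≤ M := by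
    have := norm_nonneg w; have := norm_nonneg z
    simp only [hM]; linarith
  have hMpos : 0 ≤ M := ha0.trans haM
  have hrw : (a ^ 2) ^ p = a ^ (2 * p) := by
    rw [← Real.rpow_natCast a 2, ← Real.rpow_mul ha0]; norm_num
  have hrw2 : (q0 ^ 2) ^ p = q0 ^ (2 * p) := by
    rw [← Real.rpow_natCast q0 2, ← Real.rpow_mul hq0]; norm_num
  rw [hrw, hrw2]
  have key : |a ^ (2 * p) - q0 ^ (2 * p)| ≤ (2 * p) * M ^ (2 * p - 1) * |a - q0| :=
    abs_rpow_sub_rpow_le (by linarith) ha0 hq0 haM hq0M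
  have habs : |a - q0| ≤ ‖w‖ + |‖z‖ - q0| := by
    have h1 : |a - ‖z‖| ≤ ‖w‖ := by
      have h3 : ‖w + z - z‖ = ‖w‖ := by ring_nf
      calc |a - ‖z‖| ≤ ‖w + z - z‖ :=
            abs_norm_sub_norm_le (w + z) z
        _ = ‖w‖ := h3
    calc |a - q0| = |(a - ‖z‖) + (‖z‖ - q0)| := by ring_nf
      _ ≤ |a - ‖z‖| + |‖z‖ - q0| := abs_add_le _ _
      _ ≤ ‖w‖ + |‖z‖ - q0| := by linarith
  have hMp : 0 ≤ M ^ (2 * p - 1) := Real.rpow_nonneg hMpos _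
  calc |a ^ (2 * p) - q0 ^ (2 * p)| ≤ (2 * p) * M ^ (2 * p - 1) * |a - q0| := key
    _ ≤ (4 * p) * M ^ (2 * p - 1) * (‖w‖ + |‖z‖ - q0|) := by
        apply mul_le_mul
        · apply mul_le_mul_of_nonneg_right (by linarith) hMp
        · exact habs
        · exact abs_nonneg _
        · positivity
    _ = 4 * p * M ^ (2 * p - 1) * (‖w‖ + |‖z‖ - q0|) := by ring
end

section
/- Let ζ ∈ ℓ^∞(ℤ; ℂ) with |ζ_n| → q₀ as |n| → ∞ in the sense that (|ζ_n| − q₀)_{n} ∈ ℓ², and suppose the discrete derivative ζ' = (ζ_n − ζ_{n−1})_n ∈ ℓ². Let F : ℝ → ℝ satisfy |F(x) − F(y)| ≤ K(|x|^{p−1} + |y|^{p−1})|x − y| for x, y ≥ 0 with p ≥ 1, K > 0. Then the operator G(Φ)_n := [F(|Φ_n + ζ_n|²) − F(q₀²)](Φ_n + ζ_n) maps ℓ² into ℓ² with ‖G(Φ)‖_{ℓ²} ≤ 2√2 K (‖Φ‖_{ℓ^∞} + ‖ζ‖_{ℓ^∞} + q₀)^{2p} (‖Φ‖_{ℓ²}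 + ‖|ζ| − q₀‖_{ℓ²}). -/
noncomputable def l2norm (f : ℤ → ℂ) : ℝ := Real.sqrt (∑' n : ℤ, ‖f n‖ ^ 2)

noncomputable def linfnorm (f : ℤ → ℂ) : ℝ := ⨆ n : ℤ, ‖f n‖

/-- The gDNLS nonlinearity G(Φ)_n = [F(|Φ_n+ζ_n|²) − F(q₀²)](Φ_n+ζ_n). -/
noncomputable def gNonlin (F : ℝ → ℝ) (ζ : ℤ → ℂ) (q0 : ℝ) (Φ : ℤ → ℂ) (n : ℤ) : ℂ :=
  ((F (‖Φ n + ζ n‖ ^ 2) - F (q0 ^ 2) : ℝ) : ℂ) * (Φ n + ζ n)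

lemma sqrt_add_le_aux {A B : ℝ} (hA : 0 ≤ A) (hB : 0 ≤ B) :
    Real.sqrt (A + B) ≤ Real.sqrt A + Real.sqrt B := by
  have hle : A + B ≤ (Real.sqrt A + Real.sqrt B) ^ 2 := by
    nlinarith [Real.sq_sqrt hA, Real.sq_sqrt hB,
      mul_nonneg (Real.sqrt_nonneg A) (Real.sqrt_nonneg B)]
  have h : Real.sqrt (A + B) ≤ Real.sqrt ((Real.sqrt A + Real.sqrt B) ^ 2) :=
    Real.sqrt_le_sqrt hle
  rwa [Real.sqrt_sq (by positivity)] at h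

/-- G maps ℓ² into ℓ² with the stated bound. -/
theorem gNonlin_into_l2 (ζ : ℤ → ℂ) (q0 : ℝ) (hq0 : 0 < q0)
    (hζ : Memℓp ζ ⊤)
    (hζ' : Memℓp (fun n : ℤ => ζ n - ζ (n - 1)) 2)
    (hζq : Memℓp (fun n : ℤ => (‖ζ n‖ - q0 : ℝ)) 2)
    (F : ℝ → ℝ) (K p : ℝ) (hK : 0 < K) (hp : 1 ≤ p)
    (hF : ∀ x y : ℝ, 0 ≤ x → 0 ≤ y →
      |F x - F y| ≤ K * (|x| ^ (p - 1) + |y| ^ (p - 1)) * |x - y|)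
    (Φ : ℤ → ℂ) (hΦ : Memℓp Φ 2) :
    Memℓp (gNonlin F ζ q0 Φ) 2 ∧
    l2norm (gNonlin F ζ q0 Φ) ≤
      2 * Real.sqrt 2 * K * (linfnorm Φ + linfnorm ζ + q0) ^ (2 * p) *
        (l2norm Φ + Real.sqrt (∑' n : ℤ, |‖ζ n‖ - q0| ^ 2)) := by
  classical
  set M : ℝ := linfnorm Φ + linfnorm ζ + q0 with hMdef
  -- bounded above properties
  have hPhiB : BddAbove (Set.range fun n => ‖Φ n‖) :=
    memℓp_infty_iff.1 (hΦ.of_exponent_ge le_top)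
  have hzB : BddAbove (Set.range fun n => ‖ζ n‖) := memℓp_infty_iff.1 hζ
  have hΦle : ∀ n : ℤ, ‖Φ n‖ ≤ linfnorm Φ := fun n => le_ciSup hPhiB n
  have hζle : ∀ n : ℤ, ‖ζ n‖ ≤ linfnorm ζ := fun n => le_ciSup hzB n
  have hΦ0 : 0 ≤ linfnorm Φ := Real.iSup_nonneg fun n => norm_nonneg _
  have hζ0 : 0 ≤ linfnorm ζ := Real.iSup_nonneg fun n => norm_nonneg _
  have hM0 : 0 < M := by positivity
  set C : ℝ := 2 * K * M ^ (2 * p) with hCdef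
  have hC0 : 0 ≤ C := by positivity
  set b : ℤ → ℝ := fun n => |‖ζ n‖ - q0| with hbdef
  -- key pointwise bound
  have key : ∀ n : ℤ, ‖gNonlin F ζ q0 Φ n‖ ≤ C * (‖Φ n‖ + b n) := by
    intro n
    set a : ℝ := ‖Φ n + ζ n‖ with hadef
    have ha0 : 0 ≤ a := norm_nonneg _
    have haN : ‖Φ n + ζ n‖ = a := rfl
    have haM2 : a ≤ linfnorm Φ + linfnorm ζ := by
      have h3 : ‖Φ n + ζ n‖ ≤ ‖Φ n‖ + ‖ζ n‖ := norm_add_le _ _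
      have h1 := hΦle n; have h2 := hζle n
      linarith [haN ▸ h3]
    have haM : a ≤ M := by simp only [hMdef]; linarith
    have hd : |a - q0| ≤ ‖Φ n‖ + b n := by
      have h1 : |a - ‖ζ n‖| ≤ ‖Φ n‖ := by
        have := abs_norm_sub_norm_le (Φ n + ζ n) (ζ n)
        simpa [hadef] using this
      have h2 : b n = |(‖ζ n‖ : ℝ) - q0| := by simp [hbdef]
      calc |a - q0| = |(a - ‖ζ n‖) + (‖ζ n‖ - q0)| := by ring_nf
        _ ≤ |a - ‖ζ n‖| + |(‖ζ n‖ : ℝ) - q0| := abs_add_le _ _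
        _ ≤ ‖Φ n‖ + b n := by rw [h2] at *; linarith
    have hpow : ∀ x : ℝ, 0 ≤ x → x ≤ M → |x ^ 2| ^ (p - 1) ≤ M ^ (2 * p - 2) := by
      intro x hx hxM
      have h1 : |x ^ 2| = x ^ 2 := abs_of_nonneg (sq_nonneg x)
      have h2 : (x ^ 2 : ℝ) ^ (p - 1) ≤ (M ^ 2 : ℝ) ^ (p - 1) :=
        Real.rpow_le_rpow (sq_nonneg x) (by nlinarith) (by linarith)
      have h3 : (M ^ 2 : ℝ) ^ (p - 1) = M ^ (2 * p - 2) := by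
        rw [← Real.rpow_natCast M 2, ← Real.rpow_mul hM0.le]
        norm_num; ring_nf
      rw [h1]; rw [h3] at h2; exact h2
    have hsq : |a ^ 2 - q0 ^ 2| ≤ M * |a - q0| := by
      have : a ^ 2 - q0 ^ 2 = (a + q0) * (a - q0) := by ring
      rw [this, abs_mul, abs_of_nonneg (by positivity : (0:ℝ) ≤ a + q0)]
      have hq0M : a + q0 ≤ M := by simp only [hMdef]; linarith
      exact mul_le_mul_of_nonneg_right hq0M (abs_nonneg _)
    have hFn := hF (a ^ 2) (q0 ^ 2) (sq_nonneg a) (sq_nonneg q0)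
    have hnorm : ‖gNonlin F ζ q0 Φ n‖ = |F (a ^ 2) - F (q0 ^ 2)| * a := by
      simp only [gNonlin, norm_mul, Complex.norm_real, Real.norm_eq_abs, ← hadef]
    have hq0M : q0 ≤ M := by simp only [hMdef]; linarith
    calc ‖gNonlin F ζ q0 Φ n‖ = |F (a ^ 2) - F (q0 ^ 2)| * a := hnorm
      _ ≤ (K * (|a ^ 2| ^ (p - 1) + |q0 ^ 2| ^ (p - 1)) * |a ^ 2 - q0 ^ 2|) * a := by
          exact mul_le_mul_of_nonneg_right hFn ha0
      _ ≤ (K * (M ^ (2 * p - 2) + M ^ (2 * p - 2)) * (M * (‖Φ n‖ + b n))) * M := by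
          gcongr
          · exact hpow a ha0 haM
          · exact hpow q0 hq0.le hq0M
          · calc |a ^ 2 - q0 ^ 2| ≤ M * |a - q0| := hsq
              _ ≤ M * (‖Φ n‖ + b n) := by
                exact mul_le_mul_of_nonneg_left hd hM0.le
      _ = 2 * K * (M ^ (2 * p - 2) * M * M) * (‖Φ n‖ + b n) := by ring
      _ = C * (‖Φ n‖ + b n) := by
          have hMM : M ^ (2 * p - 2) * M * M = M ^ (2 * p) := by
            have h2 : M * M = M ^ ((2:ℕ):ℝ) := by rw [Real.rpow_natCast]; ring
            rw [mul_assoc, h2, ← Real.rpow_add hM0]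
            congr 1; push_cast; ring
          rw [hMM, hCdef]
  -- summability facts
  have hsΦ : Summable fun n : ℤ => ‖Φ n‖ ^ 2 := by
    have := hΦ.summable (show (0:ℝ) < (2 : ENNReal).toReal by norm_num)
    have h2 : ((2 : ENNReal)).toReal = ((2 : ℕ) : ℝ) := by norm_num
    rw [h2] at this
    simpa [Real.rpow_natCast] using this
  have hsb : Summable fun n : ℤ => b n ^ 2 := by
    have := hζq.summable (show (0:ℝ) < (2 : ENNReal).toReal by norm_num)
    have h2 : ((2 : ENNReal)).toReal = ((2 : ℕ) : ℝ) := by norm_num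
    rw [h2] at this
    simp only [Real.rpow_natCast, Real.norm_eq_abs] at this
    simpa [hbdef, sq_abs] using this
  have hdom : ∀ n : ℤ, ‖gNonlin F ζ q0 Φ n‖ ^ 2 ≤ 2 * C ^ 2 * (‖Φ n‖ ^ 2 + b n ^ 2) := by
    intro n
    have h1 := key n
    have h2 : (0:ℝ) ≤ ‖gNonlin F ζ q0 Φ n‖ := norm_nonneg _
    nlinarith [sq_nonneg (‖Φ n‖ - b n), sq_nonneg (C * (‖Φ n‖ + b n)),
      norm_nonneg (Φ n), abs_nonneg (‖ζ n‖ - q0)]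
  have hsdom : Summable fun n : ℤ => 2 * C ^ 2 * (‖Φ n‖ ^ 2 + b n ^ 2) :=
    (hsΦ.add hsb).mul_left _
  have hsg : Summable fun n : ℤ => ‖gNonlin F ζ q0 Φ n‖ ^ 2 :=
    Summable.of_nonneg_of_le (fun n => by positivity) hdom hsdom
  constructor
  · apply memℓp_gen
    have h2 : ((2 : ENNReal)).toReal = ((2 : ℕ) : ℝ) := by norm_num
    rw [h2]
    simpa [Real.rpow_natCast] using hsg
  · -- norm bound
    have htsum : (∑' n : ℤ, ‖gNonlin F ζ q0 Φ n‖ ^ 2) ≤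
        2 * C ^ 2 * ((∑' n : ℤ, ‖Φ n‖ ^ 2) + ∑' n : ℤ, b n ^ 2) := by
      calc (∑' n : ℤ, ‖gNonlin F ζ q0 Φ n‖ ^ 2)
          ≤ ∑' n : ℤ, 2 * C ^ 2 * (‖Φ n‖ ^ 2 + b n ^ 2) := Summable.tsum_le_tsum hdom hsg hsdom
        _ = 2 * C ^ 2 * ((∑' n : ℤ, ‖Φ n‖ ^ 2) + ∑' n : ℤ, b n ^ 2) := by
            rw [tsum_mul_left, Summable.tsum_add hsΦ hsb]
    have hA0 : 0 ≤ ∑' n : ℤ, ‖Φ n‖ ^ 2 := tsum_nonneg fun n => sq_nonneg _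
    have hB0 : 0 ≤ ∑' n : ℤ, b n ^ 2 := tsum_nonneg fun n => sq_nonneg _
    calc l2norm (gNonlin F ζ q0 Φ)
        ≤ Real.sqrt (2 * C ^ 2 * ((∑' n : ℤ, ‖Φ n‖ ^ 2) + ∑' n : ℤ, b n ^ 2)) :=
          Real.sqrt_le_sqrt htsum
      _ = Real.sqrt 2 * C * Real.sqrt ((∑' n : ℤ, ‖Φ n‖ ^ 2) + ∑' n : ℤ, b n ^ 2) := by
          rw [Real.sqrt_mul (by positivity), Real.sqrt_mul (by norm_num),
            Real.sqrt_sq hC0]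
      _ ≤ Real.sqrt 2 * C *
            (Real.sqrt (∑' n : ℤ, ‖Φ n‖ ^ 2) + Real.sqrt (∑' n : ℤ, b n ^ 2)) := by
          have := sqrt_add_le_aux hA0 hB0
          exact mul_le_mul_of_nonneg_left this (by positivity)
      _ = 2 * Real.sqrt 2 * K * M ^ (2 * p) *
            (l2norm Φ + Real.sqrt (∑' n : ℤ, |‖ζ n‖ - q0| ^ 2)) := by
          simp only [l2norm, hbdef, hCdef]; ring
end

section
/- Let ζ ∈ ℓ^∞(ℤ; ℂ) with ζ' = (ζ_n − ζ_{n−1})_n ∈ ℓ² and (|ζ_n| − q₀)_n ∈ ℓ², q₀ > 0, and let p ≥ 1. The generalized Ablowitz–Ladik nonlinearity 𝒢(φ)_n := |φ_n + ζ_n|^{2p}(φ_{n+1} + φ_{n−1} + ζ_{n+1} + ζ_{n−1}) − 2q₀^{2p}(φ_n + ζ_n) maps ℓ² into ℓ² and satisfies ‖𝒢(φ)‖_{ℓ²} ≤ 16p (‖φ‖_{ℓ^∞} + ‖ζ‖_{ℓ^∞} + q₀)^{2p} (‖φ‖_{ℓ²} + ‖|ζ| − q₀‖_{ℓ²}) +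 8 q₀^{2p} ‖φ‖_{ℓ²} + 4 q₀^{2p} ‖ζ'‖_{ℓ²}. -/
/-- The generalized Ablowitz–Ladik nonlinearity
𝒢(φ)_n = |φ_n+ζ_n|^{2p}(φ_{n+1}+φ_{n−1}+ζ_{n+1}+ζ_{n−1}) − 2q₀^{2p}(φ_n+ζ_n). -/
noncomputable def galNonlin (ζ : ℤ → ℂ) (q0 p : ℝ) (φ : ℤ → ℂ) (n : ℤ) : ℂ :=
  (((‖φ n + ζ n‖ ^ 2) ^ p : ℝ) : ℂ) *
      (φ (n + 1) + φ (n - 1) + ζ (n + 1) + ζ (n - 1))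
    - 2 * (((q0 ^ 2) ^ p : ℝ) : ℂ) * (φ n + ζ n)

lemma mem2_iff (f : ℤ → ℂ) : Memℓp f 2 ↔ Summable (fun n => ‖f n‖ ^ 2) := by
  constructor
  · intro h
    have := (memℓp_gen_iff (p := 2) (by norm_num)).1 h
    simpa [ENNReal.toReal_ofNat, Real.rpow_natCast] using this
  · intro h
    apply memℓp_gen
    simpa [ENNReal.toReal_ofNat, Real.rpow_natCast] using h

lemma l2norm_eq_lp (f : ℤ → ℂ) (hf : Memℓp f 2) :
    l2norm f = ‖(⟨f, hf⟩ : lp (fun _ : ℤ => ℂ) 2)‖ := by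
  rw [l2norm, lp.norm_eq_tsum_rpow (by norm_num), Real.sqrt_eq_rpow]
  norm_num [Real.rpow_natCast]

lemma l2norm_nonneg (f : ℤ → ℂ) : 0 ≤ l2norm f := Real.sqrt_nonneg _

lemma l2norm_mono {f g : ℤ → ℂ} (hg : Memℓp g 2) (h : ∀ n, ‖f n‖ ≤ ‖g n‖) :
    Memℓp f 2 ∧ l2norm f ≤ l2norm g := by
  have hgs := (mem2_iff g).1 hg
  have hfs : Summable (fun n => ‖f n‖ ^ 2) := by
    apply Summable.of_nonneg_of_le (fun n => by positivity) (fun n => ?_) hgs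
    exact pow_le_pow_left₀ (norm_nonneg _) (h n) 2
  refine ⟨(mem2_iff f).2 hfs, Real.sqrt_le_sqrt ?_⟩
  exact Summable.tsum_le_tsum (fun n => pow_le_pow_left₀ (norm_nonneg _) (h n) 2) hfs hgs

lemma l2norm_add_le {f g : ℤ → ℂ} (hf : Memℓp f 2) (hg : Memℓp g 2) :
    l2norm (fun n => f n + g n) ≤ l2norm f + l2norm g := by
  have h2 : Memℓp (fun n => f n + g n) 2 := hf.add hg
  rw [l2norm_eq_lp f hf, l2norm_eq_lp g hg, l2norm_eq_lp _ h2]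
  have : (⟨fun n => f n + g n, h2⟩ : lp (fun _ : ℤ => ℂ) 2)
      = (⟨f, hf⟩ : lp (fun _ : ℤ => ℂ) 2) + ⟨g, hg⟩ := rfl
  rw [this]
  exact norm_add_le _ _

lemma l2norm_sub_le {f g : ℤ → ℂ} (hf : Memℓp f 2) (hg : Memℓp g 2) :
    l2norm (fun n => f n - g n) ≤ l2norm f + l2norm g := by
  have h2 : Memℓp (fun n => f n - g n) 2 := hf.sub hg
  rw [l2norm_eq_lp f hf, l2norm_eq_lp g hg, l2norm_eq_lp _ h2]
  have : (⟨fun n => f n - g n, h2⟩ : lp (fun _ : ℤ => ℂ) 2)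
      = (⟨f, hf⟩ : lp (fun _ : ℤ => ℂ) 2) - ⟨g, hg⟩ := rfl
  rw [this]
  exact norm_sub_le _ _

lemma l2norm_const_mul (c : ℂ) (f : ℤ → ℂ) :
    l2norm (fun n => c * f n) = ‖c‖ * l2norm f := by
  simp only [l2norm, norm_mul, mul_pow, tsum_mul_left]
  rw [Real.sqrt_mul (by positivity), Real.sqrt_sq (norm_nonneg _)]

lemma mem2_shift {f : ℤ → ℂ} (hf : Memℓp f 2) (k : ℤ) :
    Memℓp (fun n => f (n + k)) 2 := by
  rw [mem2_iff] at hf ⊢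
  exact ((Equiv.addRight k).summable_iff (f := fun n => ‖f n‖ ^ 2)).2 hf

lemma l2norm_shift (f : ℤ → ℂ) (k : ℤ) : l2norm (fun n => f (n + k)) = l2norm f := by
  unfold l2norm
  congr 1
  exact (Equiv.addRight k).tsum_eq (fun n => ‖f n‖ ^ 2)

lemma abs_rpow_sub_rpow_le_s11 {p c a b : ℝ} (hp : 1 ≤ p)
    (ha : a ∈ Set.Icc 0 c) (hb : b ∈ Set.Icc 0 c) :
    |a ^ p - b ^ p| ≤ p * c ^ (p - 1) * |a - b| := by
  have key := Convex.norm_image_sub_le_of_norm_hasDerivWithin_le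
    (f := fun x : ℝ => x ^ p) (f' := fun x : ℝ => p * x ^ (p - 1))
    (s := Set.Icc 0 c) (C := p * c ^ (p - 1))
    (fun x _ => (Real.hasDerivAt_rpow_const (Or.inr hp)).hasDerivWithinAt)
    (fun x hx => ?_) (convex_Icc 0 c) hb ha
  · simpa [Real.norm_eq_abs] using key
  · rw [Real.norm_eq_abs, abs_mul, abs_of_nonneg (by linarith : (0:ℝ) ≤ p),
      abs_of_nonneg (Real.rpow_nonneg hx.1 _)]
    exact mul_le_mul_of_nonneg_left
      (Real.rpow_le_rpow hx.1 hx.2 (by linarith)) (by linarith)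

set_option maxHeartbeats 1000000

/-- 𝒢 maps ℓ² into ℓ² with the stated bound. -/
theorem galNonlin_into_l2 (ζ : ℤ → ℂ) (q0 p : ℝ) (hq0 : 0 < q0) (hp : 1 ≤ p)
    (hζ : Memℓp ζ ⊤)
    (hζ' : Memℓp (fun n : ℤ => ζ n - ζ (n - 1)) 2)
    (hζq : Memℓp (fun n : ℤ => (‖ζ n‖ - q0 : ℝ)) 2)
    (φ : ℤ → ℂ) (hφ : Memℓp φ 2) :
    Memℓp (galNonlin ζ q0 p φ) 2 ∧
    l2norm (galNonlin ζ q0 p φ) ≤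
      16 * p * (linfnorm φ + linfnorm ζ + q0) ^ (2 * p) *
          (l2norm φ + Real.sqrt (∑' n : ℤ, |‖ζ n‖ - q0| ^ 2))
        + 8 * (q0 ^ 2) ^ p * l2norm φ
        + 4 * (q0 ^ 2) ^ p * l2norm (fun n => ζ n - ζ (n - 1)) := by
  -- sup-norm bounds
  have hφb : BddAbove (Set.range fun n => ‖φ n‖) :=
    memℓp_infty_iff.1 (hφ.of_exponent_ge le_top)
  have hζb : BddAbove (Set.range fun n => ‖ζ n‖) := memℓp_infty_iff.1 hζ
  have hphis : ∀ n, ‖φ n‖ ≤ linfnorm φ := fun n => by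
    rw [linfnorm]; exact le_ciSup hφb n
  have hzetas : ∀ n, ‖ζ n‖ ≤ linfnorm ζ := fun n => by
    rw [linfnorm]; exact le_ciSup hζb n
  have hMφ0 : 0 ≤ linfnorm φ := (norm_nonneg (φ 0)).trans (hphis 0)
  have hMζ0 : 0 ≤ linfnorm ζ := (norm_nonneg (ζ 0)).trans (hzetas 0)
  set M : ℝ := linfnorm φ + linfnorm ζ + q0 with hM_def
  have hM0 : 0 < M := by positivity
  set r : ℤ → ℝ := fun n => |‖ζ n‖ - q0| with hr_def
  -- the two pieces
  set A : ℤ → ℂ := fun n =>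
    ((((‖φ n + ζ n‖ ^ 2) ^ p - (q0 ^ 2) ^ p : ℝ)) : ℂ) *
      (φ (n + 1) + φ (n - 1) + ζ (n + 1) + ζ (n - 1)) with hA_def
  set B : ℤ → ℂ := fun n =>
    (((q0 ^ 2) ^ p : ℝ) : ℂ) *
      ((φ (n + 1) - φ n) + (φ (n - 1) - φ n) + (ζ (n + 1) - ζ n) + (ζ (n - 1) - ζ n))
    with hB_def
  have hdecomp : galNonlin ζ q0 p φ = fun n => A n + B n := by
    funext n
    simp only [galNonlin, hA_def, hB_def]
    push_cast
    ring
  -- the dominating sequence for A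
  set g : ℤ → ℂ := fun n => ((2 * p * M ^ (2 * p) * (‖φ n‖ + r n) : ℝ) : ℂ) with hg_def
  have hM2p : ((M ^ 2 : ℝ)) ^ (p - 1) * M ^ 2 = M ^ (2 * p) := by
    have h1 : ((M ^ 2 : ℝ)) ^ (p - 1) * (M ^ 2) ^ (1 : ℝ) = (M ^ 2) ^ (p - 1 + 1) :=
      (Real.rpow_add (by positivity) _ _).symm
    rw [Real.rpow_one] at h1
    rw [h1, sub_add_cancel, ← Real.rpow_two, ← Real.rpow_mul hM0.le]
  have hgnorm : ∀ n, ‖g n‖ = 2 * p * M ^ (2 * p) * (‖φ n‖ + r n) := by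
    intro n
    rw [hg_def]
    have : (0:ℝ) ≤ 2 * p * M ^ (2 * p) * (‖φ n‖ + r n) := by
      have : (0:ℝ) ≤ r n := abs_nonneg _
      have h2 : (0:ℝ) ≤ M ^ (2*p) := Real.rpow_nonneg hM0.le _
      positivity
    rw [Complex.norm_real, Real.norm_eq_abs, abs_of_nonneg this]
  have hAbound : ∀ n, ‖A n‖ ≤ ‖g n‖ := by
    intro n
    set a : ℝ := ‖φ n + ζ n‖ with ha_def
    have ha0 : 0 ≤ a := norm_nonneg _
    have haM' : a ≤ linfnorm φ + linfnorm ζ := by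
      rw [ha_def]
      calc ‖φ n + ζ n‖ ≤ ‖φ n‖ + ‖ζ n‖ := norm_add_le _ _
        _ ≤ linfnorm φ + linfnorm ζ := add_le_add (hphis n) (hzetas n)
    have haM : a ≤ M := by rw [hM_def]; linarith
    have hqM : q0 ≤ M := by rw [hM_def]; linarith
    have h1 : |(a ^ 2) ^ p - (q0 ^ 2) ^ p| ≤ p * (M ^ 2) ^ (p - 1) * |a ^ 2 - q0 ^ 2| :=
      abs_rpow_sub_rpow_le_s11 hp ⟨by positivity, pow_le_pow_left₀ ha0 haM 2⟩
        ⟨by positivity, pow_le_pow_left₀ hq0.le hqM 2⟩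
    have h2 : |a ^ 2 - q0 ^ 2| ≤ M * (‖φ n‖ + r n) := by
      have he : a ^ 2 - q0 ^ 2 = (a + q0) * (a - q0) := by ring
      rw [he, abs_mul]
      have e1 : |a + q0| ≤ M := by
        rw [abs_of_nonneg (by positivity), hM_def]
        linarith
      have e2 : |a - q0| ≤ ‖φ n‖ + r n := by
        have t1 : |a - ‖ζ n‖| ≤ ‖φ n‖ := by
          have := abs_norm_sub_norm_le (φ n + ζ n) (ζ n)
          simpa [ha_def] using this
        calc |a - q0| = |(a - ‖ζ n‖) + (‖ζ n‖ - q0)| := by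
              ring_nf
          _ ≤ |a - ‖ζ n‖| + |‖ζ n‖ - q0| := abs_add_le _ _
          _ ≤ ‖φ n‖ + r n := add_le_add t1 le_rfl
      exact mul_le_mul e1 e2 (abs_nonneg _) hM0.le
    have h3 : ‖φ (n + 1) + φ (n - 1) + ζ (n + 1) + ζ (n - 1)‖ ≤ 2 * M := by
      calc ‖φ (n + 1) + φ (n - 1) + ζ (n + 1) + ζ (n - 1)‖
          ≤ ‖φ (n + 1)‖ + ‖φ (n - 1)‖ + ‖ζ (n + 1)‖ + ‖ζ (n - 1)‖ := by
            exact le_trans (norm_add_le _ _) (add_le_add (le_trans (norm_add_le _ _)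
              (add_le_add (norm_add_le _ _) le_rfl)) le_rfl)
        _ ≤ linfnorm φ + linfnorm φ + linfnorm ζ + linfnorm ζ := by
            exact add_le_add (add_le_add (add_le_add (hphis _) (hphis _)) (hzetas _)) (hzetas _)
        _ ≤ 2 * M := by rw [hM_def]; linarith
    have hAn : ‖A n‖ = |(a ^ 2) ^ p - (q0 ^ 2) ^ p| *
        ‖φ (n + 1) + φ (n - 1) + ζ (n + 1) + ζ (n - 1)‖ := by
      simp only [hA_def]
      rw [norm_mul, Complex.norm_real, Real.norm_eq_abs, ← ha_def]
    rw [hAn, hgnorm n]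
    calc |(a ^ 2) ^ p - (q0 ^ 2) ^ p| * ‖φ (n + 1) + φ (n - 1) + ζ (n + 1) + ζ (n - 1)‖
        ≤ (p * (M ^ 2) ^ (p - 1) * (M * (‖φ n‖ + r n))) * (2 * M) := by
          apply mul_le_mul (h1.trans (by
            apply mul_le_mul_of_nonneg_left h2
            have : (0:ℝ) ≤ (M^2 : ℝ) ^ (p-1) := Real.rpow_nonneg (by positivity) _
            positivity)) h3 (norm_nonneg _) ?_
          have h4 : (0:ℝ) ≤ (M^2 : ℝ) ^ (p-1) := Real.rpow_nonneg (by positivity) _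
          have h5 : (0:ℝ) ≤ ‖φ n‖ + r n := by positivity
          positivity
      _ = 2 * p * ((M ^ 2 : ℝ) ^ (p - 1) * M ^ 2) * (‖φ n‖ + r n) := by ring
      _ = 2 * p * M ^ (2 * p) * (‖φ n‖ + r n) := by rw [hM2p]
  -- auxiliary real sequences embedded in ℂ
  set u : ℤ → ℂ := fun n => ((‖φ n‖ : ℝ) : ℂ) with hu_def
  set v : ℤ → ℂ := fun n => ((r n : ℝ) : ℂ) with hv_def
  have hu2 : Memℓp u 2 := by
    rw [mem2_iff]
    have := (mem2_iff φ).1 hφ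
    simpa [hu_def, Complex.norm_real, Real.norm_eq_abs, abs_norm] using this
  have hζq_sum : Summable (fun n => r n ^ 2) := by
    have := (memℓp_gen_iff (p := 2) (by norm_num)).1 hζq
    simpa [hr_def, ENNReal.toReal_ofNat, Real.rpow_natCast, Real.norm_eq_abs,
      sq_abs] using this
  have hv2 : Memℓp v 2 := by
    rw [mem2_iff]
    simpa [hv_def, Complex.norm_real, Real.norm_eq_abs, abs_abs, hr_def,
      sq_abs] using hζq_sum
  have hlu : l2norm u = l2norm φ := by
    unfold l2norm
    congr 1
    exact tsum_congr fun n => by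
      rw [hu_def]; simp [Complex.norm_real, Real.norm_eq_abs, abs_norm]
  have hlv : l2norm v = Real.sqrt (∑' n : ℤ, |‖ζ n‖ - q0| ^ 2) := by
    unfold l2norm
    congr 1
    exact tsum_congr fun n => by
      rw [hv_def]; simp [Complex.norm_real, Real.norm_eq_abs, abs_abs, hr_def]
  have hgsplit : g = fun n => ((2 * p * M ^ (2 * p) : ℝ) : ℂ) * (u n + v n) := by
    funext n
    rw [hg_def, hu_def, hv_def]
    push_cast
    ring
  have hg2 : Memℓp g 2 := by
    rw [hgsplit]
    exact (hu2.add hv2).const_mul _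
  have hc0 : (0:ℝ) ≤ 2 * p * M ^ (2 * p) := by
    have : (0:ℝ) ≤ M ^ (2 * p) := Real.rpow_nonneg hM0.le _
    positivity
  have hgl : l2norm g ≤ 2 * p * M ^ (2 * p) *
      (l2norm φ + Real.sqrt (∑' n : ℤ, |‖ζ n‖ - q0| ^ 2)) := by
    rw [hgsplit, l2norm_const_mul, Complex.norm_real, Real.norm_eq_abs,
      abs_of_nonneg hc0]
    apply mul_le_mul_of_nonneg_left _ hc0
    calc l2norm (fun n => u n + v n) ≤ l2norm u + l2norm v := l2norm_add_le hu2 hv2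
      _ = _ := by rw [hlu, hlv]
  obtain ⟨hA2, hAl⟩ := l2norm_mono hg2 hAbound
  have hAfinal : l2norm A ≤ 2 * p * M ^ (2 * p) *
      (l2norm φ + Real.sqrt (∑' n : ℤ, |‖ζ n‖ - q0| ^ 2)) := hAl.trans hgl
  -- the B part
  set d1 : ℤ → ℂ := fun n => φ (n + 1) - φ n with hd1_def
  set d2 : ℤ → ℂ := fun n => φ (n - 1) - φ n with hd2_def
  set d3 : ℤ → ℂ := fun n => ζ (n + 1) - ζ n with hd3_def
  set d4 : ℤ → ℂ := fun n => ζ (n - 1) - ζ n with hd4_def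
  have hshift1 : Memℓp (fun n : ℤ => φ (n + 1)) 2 := mem2_shift hφ 1
  have hd1 : Memℓp d1 2 := hshift1.sub hφ
  have hld1 : l2norm d1 ≤ 2 * l2norm φ := by
    have := l2norm_sub_le hshift1 hφ
    rw [l2norm_shift φ 1] at this
    rw [hd1_def]
    linarith
  have e2 : d2 = fun n : ℤ => φ (n + (-1)) - φ n := by
    funext n
    rw [hd2_def]
    norm_num [sub_eq_add_neg]
  have hshift2 : Memℓp (fun n : ℤ => φ (n + (-1))) 2 := mem2_shift hφ (-1)
  have hd2 : Memℓp d2 2 := by rw [e2]; exact hshift2.sub hφ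
  have hld2 : l2norm d2 ≤ 2 * l2norm φ := by
    have := l2norm_sub_le hshift2 hφ
    rw [l2norm_shift φ (-1)] at this
    rw [e2]
    linarith
  have e3 : (fun n : ℤ => (fun m : ℤ => ζ m - ζ (m - 1)) (n + 1)) = d3 := by
    funext n
    rw [hd3_def]
    norm_num
  have hd3 : Memℓp d3 2 := by
    have h := mem2_shift hζ' 1
    rwa [e3] at h
  have hld3 : l2norm d3 = l2norm (fun n => ζ n - ζ (n - 1)) := by
    have h := l2norm_shift (fun m : ℤ => ζ m - ζ (m - 1)) 1
    rwa [e3] at h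
  have e4 : d4 = fun n : ℤ => -(ζ n - ζ (n - 1)) := by
    funext n
    rw [hd4_def]
    ring
  have hd4 : Memℓp d4 2 := by rw [e4]; exact hζ'.neg
  have hld4 : l2norm d4 = l2norm (fun n => ζ n - ζ (n - 1)) := by
    rw [e4]
    unfold l2norm
    congr 1
    exact tsum_congr fun n => by rw [norm_neg]
  set c : ℝ := (q0 ^ 2) ^ p with hc_def
  have hcpos : (0:ℝ) ≤ c := Real.rpow_nonneg (by positivity) _
  have hDsum : Memℓp (fun n => d1 n + d2 n + d3 n + d4 n) 2 := ((hd1.add hd2).add hd3).add hd4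
  have hB2 : Memℓp B 2 := by
    have : B = fun n => ((c : ℝ) : ℂ) * (d1 n + d2 n + d3 n + d4 n) := rfl
    rw [this]
    exact hDsum.const_mul _
  have hBl : l2norm B ≤ c * (2 * l2norm φ + 2 * l2norm φ +
      l2norm (fun n => ζ n - ζ (n - 1)) + l2norm (fun n => ζ n - ζ (n - 1))) := by
    have hBeq : B = fun n => ((c : ℝ) : ℂ) * (d1 n + d2 n + d3 n + d4 n) := rfl
    rw [hBeq, l2norm_const_mul, Complex.norm_real, Real.norm_eq_abs, abs_of_nonneg hcpos]
    apply mul_le_mul_of_nonneg_left _ hcpos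
    calc l2norm (fun n => d1 n + d2 n + d3 n + d4 n)
        ≤ l2norm (fun n => d1 n + d2 n + d3 n) + l2norm d4 :=
          l2norm_add_le ((hd1.add hd2).add hd3) hd4
      _ ≤ l2norm (fun n => d1 n + d2 n) + l2norm d3 + l2norm d4 :=
          add_le_add (l2norm_add_le (hd1.add hd2) hd3) le_rfl
      _ ≤ l2norm d1 + l2norm d2 + l2norm d3 + l2norm d4 :=
          add_le_add (add_le_add (l2norm_add_le hd1 hd2) le_rfl) le_rfl
      _ ≤ _ := by rw [hld3, hld4]; exact add_le_add (add_le_add (add_le_add hld1 hld2) le_rfl) le_rfl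
  -- conclusion
  have hG2 : Memℓp (galNonlin ζ q0 p φ) 2 := by
    rw [hdecomp]
    exact hA2.add hB2
  refine ⟨hG2, ?_⟩
  have hGl : l2norm (galNonlin ζ q0 p φ) ≤ l2norm A + l2norm B := by
    rw [hdecomp]
    exact l2norm_add_le hA2 hB2
  set X : ℝ := l2norm φ with hX_def
  set Y : ℝ := Real.sqrt (∑' n : ℤ, |‖ζ n‖ - q0| ^ 2) with hY_def
  set Z : ℝ := l2norm (fun n => ζ n - ζ (n - 1)) with hZ_def
  have hX0 : 0 ≤ X := l2norm_nonneg _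
  have hY0 : 0 ≤ Y := Real.sqrt_nonneg _
  have hZ0 : 0 ≤ Z := l2norm_nonneg _
  have hMp0 : (0:ℝ) ≤ M ^ (2 * p) := Real.rpow_nonneg hM0.le _
  have key1 : (0:ℝ) ≤ p * M ^ (2 * p) * (X + Y) := by positivity
  have key2 : (0:ℝ) ≤ c * X := mul_nonneg hcpos hX0
  have key3 : (0:ℝ) ≤ c * Z := mul_nonneg hcpos hZ0
  calc l2norm (galNonlin ζ q0 p φ) ≤ l2norm A + l2norm B := hGl
    _ ≤ 2 * p * M ^ (2 * p) * (X + Y) + c * (2 * X + 2 * X + Z + Z) :=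
        add_le_add hAfinal hBl
    _ ≤ 16 * p * M ^ (2 * p) * (X + Y) + 8 * c * X + 4 * c * Z := by nlinarith
    _ = 16 * p * M ^ (2 * p) * (X + Y) + 8 * c * X + 4 * c * Z := rfl
end

section
/- Let N ≥ 2, h > 0, κ, γ real, and let ζ : {0,…,N} → ℂ be given. Suppose Φ : [0,T] → ℂ^{N+1} is a C¹ solution of the finite-lattice modified gDNLS system i Φ_n' + κ(Φ_{n+1} + Φ_{n−1} − 2Φ_n + ζ_{n+1} + ζ_{n−1} − 2ζ_n) + γ[F(|Φ_n + ζ_n|²) − F(q₀²)](Φ_n + ζ_n) = 0 for 1 ≤ n ≤ N−1, with homogeneous Dirichlet boundary conditions Φ_0(t) = Φ_N(t) = 0 and ζ_0 = ζ_N = 0, where F : ℝ → ℝ is real-valued. Then the functional 𝒫[Φ(t)] := (1/2) Σ_{n=1}^{N−1} |Φ_n(t)|² + Re Σ_{n=1}^{N−1} Φ_n(t) \overline{ζ_n} is conserved: 𝒫[Φ(t)] = 𝒫[Φ(0)] for all t ∈ [0,T]. -/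
private lemma hasDerivAt_re' {f : ℝ → ℂ} {f' : ℂ} {x : ℝ} (hf : HasDerivAt f f' x) :
    HasDerivAt (fun s => (f s).re) f'.re x :=
  Complex.reCLM.hasFDerivAt.comp_hasDerivAt x hf

private lemma hasDerivAt_im' {f : ℝ → ℂ} {f' : ℂ} {x : ℝ} (hf : HasDerivAt f f' x) :
    HasDerivAt (fun s => (f s).im) f'.im x :=
  Complex.imCLM.hasFDerivAt.comp_hasDerivAt x hf

/-- Conservation of 𝒫[Φ(t)] = (1/2)Σ|Φ_n|² + Re Σ Φ_n conj(ζ_n) for the finite-lattice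
modified gDNLS with homogeneous Dirichlet boundary conditions. -/
theorem finite_lattice_gdnls_conservation
    (N : ℕ) (hN : 2 ≤ N) (h T κ γ q0 : ℝ) (hh : 0 < h) (hT : 0 ≤ T) (hq0 : 0 < q0)
    (F : ℝ → ℝ) (ζ : ℤ → ℂ) (Φ Φ' : ℝ → ℤ → ℂ)
    (hderiv : ∀ (n : ℤ) (t : ℝ), HasDerivAt (fun s => Φ s n) (Φ' t n) t)
    (hbc : ∀ t : ℝ, Φ t 0 = 0 ∧ Φ t (N : ℤ) = 0)
    (hζ0 : ζ 0 = 0) (hζN : ζ (N : ℤ) = 0)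
    (hode : ∀ t ∈ Set.Icc (0 : ℝ) T, ∀ n : ℤ, 1 ≤ n → n ≤ (N : ℤ) - 1 →
      Complex.I * Φ' t n
        + (κ : ℂ) * (Φ t (n + 1) + Φ t (n - 1) - 2 * Φ t n
            + ζ (n + 1) + ζ (n - 1) - 2 * ζ n)
        + (γ : ℂ) * ((F (‖Φ t n + ζ n‖ ^ 2) - F (q0 ^ 2) : ℝ) : ℂ)
            * (Φ t n + ζ n) = 0) :
    ∀ t ∈ Set.Icc (0 : ℝ) T,
      (1 / 2) * ∑ n ∈ Finset.Icc (1 : ℤ) ((N : ℤ) - 1), ‖Φ t n‖ ^ 2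
        + (∑ n ∈ Finset.Icc (1 : ℤ) ((N : ℤ) - 1), Φ t n * (starRingEnd ℂ) (ζ n)).re
      = (1 / 2) * ∑ n ∈ Finset.Icc (1 : ℤ) ((N : ℤ) - 1), ‖Φ 0 n‖ ^ 2
        + (∑ n ∈ Finset.Icc (1 : ℤ) ((N : ℤ) - 1), Φ 0 n * (starRingEnd ℂ) (ζ n)).re := by
  intro t ht
  set S : Finset ℤ := Finset.Icc (1 : ℤ) ((N : ℤ) - 1) with hSdef
  set P : ℝ → ℝ := fun s =>
    (1 / 2) * ∑ n ∈ S, ‖Φ s n‖ ^ 2 + (∑ n ∈ S, Φ s n * (starRingEnd ℂ) (ζ n)).re with hPdef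
  show P t = P 0
  -- a convenient formula for P in terms of real and imaginary parts
  have hPre : ∀ s, P s = (1 / 2) * ∑ n ∈ S, ((Φ s n).re ^ 2 + (Φ s n).im ^ 2)
      + ∑ n ∈ S, ((Φ s n).re * (ζ n).re + (Φ s n).im * (ζ n).im) := by
    intro s
    simp only [hPdef, Complex.re_sum]
    congr 1
    · congr 1
      refine Finset.sum_congr rfl fun n _ => ?_
      rw [Complex.sq_norm, Complex.normSq_apply]
      ring
    · refine Finset.sum_congr rfl fun n _ => ?_
      simp [Complex.mul_re]
  -- P has derivative D x at every x
  have hD : ∀ x : ℝ, HasDerivAt P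
      (∑ n ∈ S, (Φ' x n * (starRingEnd ℂ) (Φ x n + ζ n)).re) x := by
    intro x
    have h1 : HasDerivAt (fun s => (1 / 2) * ∑ n ∈ S, ((Φ s n).re ^ 2 + (Φ s n).im ^ 2)
        + ∑ n ∈ S, ((Φ s n).re * (ζ n).re + (Φ s n).im * (ζ n).im))
        ((1 / 2) * ∑ n ∈ S, (2 * (Φ x n).re ^ 1 * (Φ' x n).re
            + 2 * (Φ x n).im ^ 1 * (Φ' x n).im)
          + ∑ n ∈ S, ((Φ' x n).re * (ζ n).re + (Φ' x n).im * (ζ n).im)) x := by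
      refine HasDerivAt.add (HasDerivAt.const_mul _ ?_) ?_
      · exact HasDerivAt.fun_sum fun n _ =>
          ((hasDerivAt_re' (hderiv n x)).pow 2).add ((hasDerivAt_im' (hderiv n x)).pow 2)
      · exact HasDerivAt.fun_sum fun n _ =>
          ((hasDerivAt_re' (hderiv n x)).mul_const _).add
            ((hasDerivAt_im' (hderiv n x)).mul_const _)
    have h2 : HasDerivAt P ((1 / 2) * ∑ n ∈ S, (2 * (Φ x n).re ^ 1 * (Φ' x n).re
            + 2 * (Φ x n).im ^ 1 * (Φ' x n).im)
          + ∑ n ∈ S, ((Φ' x n).re * (ζ n).re + (Φ' x n).im * (ζ n).im)) x := by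
      refine h1.congr_of_eventuallyEq ?_
      filter_upwards with s using hPre s
    convert h2 using 1
    rw [Finset.mul_sum, ← Finset.sum_add_distrib]
    refine Finset.sum_congr rfl fun n _ => ?_
    simp [Complex.mul_re]
    ring
  -- the derivative vanishes on [0, T]
  have hzero : ∀ x ∈ Set.Icc (0 : ℝ) T,
      (∑ n ∈ S, (Φ' x n * (starRingEnd ℂ) (Φ x n + ζ n)).re) = 0 := by
    intro x hx
    set Ψ : ℤ → ℂ := fun n => Φ x n + ζ n with hΨdef
    have hΨ0 : Ψ 0 = 0 := by simp [hΨdef, (hbc x).1, hζ0]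
    have hΨN : Ψ (N : ℤ) = 0 := by simp [hΨdef, (hbc x).2, hζN]
    have hΦ' : ∀ n ∈ S, Φ' x n = Complex.I *
        ((κ : ℂ) * (Ψ (n + 1) + Ψ (n - 1) - 2 * Ψ n)
          + (γ : ℂ) * ((F (‖Ψ n‖ ^ 2) - F (q0 ^ 2) : ℝ) : ℂ) * Ψ n) := by
      intro n hn
      rw [hSdef, Finset.mem_Icc] at hn
      have hode' := hode x hx n hn.1 hn.2
      simp only [hΨdef]
      linear_combination (-Complex.I) * hode' + (Φ' x n) * Complex.I_sq
    -- rewrite the sum termwise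
    have key : ∀ n ∈ S, (Φ' x n * (starRingEnd ℂ) (Ψ n)).re
        = -κ * ((Ψ (n + 1) * (starRingEnd ℂ) (Ψ n)).im
            + (Ψ (n - 1) * (starRingEnd ℂ) (Ψ n)).im) := by
      intro n hn
      rw [hΦ' n hn]
      simp [Complex.mul_re, Complex.mul_im]
      ring
    calc (∑ n ∈ S, (Φ' x n * (starRingEnd ℂ) (Φ x n + ζ n)).re)
        = ∑ n ∈ S, (-κ * ((Ψ (n + 1) * (starRingEnd ℂ) (Ψ n)).im
            + (Ψ (n - 1) * (starRingEnd ℂ) (Ψ n)).im)) :=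
          Finset.sum_congr rfl fun n hn => key n hn
      _ = -κ * ((∑ n ∈ S, Ψ (n + 1) * (starRingEnd ℂ) (Ψ n)).im
            + (∑ n ∈ S, Ψ (n - 1) * (starRingEnd ℂ) (Ψ n)).im) := by
          rw [Complex.im_sum, Complex.im_sum, ← Finset.sum_add_distrib, Finset.mul_sum]
      _ = 0 := by
          have hT2 : (∑ n ∈ S, Ψ (n - 1) * (starRingEnd ℂ) (Ψ n))
              = ∑ n ∈ Finset.Icc (0 : ℤ) ((N : ℤ) - 2),
                  Ψ n * (starRingEnd ℂ) (Ψ (n + 1)) := by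
            have hmap : Finset.Icc (1 : ℤ) ((N : ℤ) - 1)
                = Finset.map (addRightEmbedding 1) (Finset.Icc (0 : ℤ) ((N : ℤ) - 2)) := by
              rw [Finset.map_add_right_Icc]
              congr 1 <;> ring
            rw [hSdef, hmap, Finset.sum_map]
            refine Finset.sum_congr rfl fun n _ => ?_
            simp [addRightEmbedding]
          have hT1c : (starRingEnd ℂ) (∑ n ∈ S, Ψ (n + 1) * (starRingEnd ℂ) (Ψ n))
              = ∑ n ∈ S, Ψ n * (starRingEnd ℂ) (Ψ (n + 1)) := by
            rw [map_sum]
            refine Finset.sum_congr rfl fun n _ => ?_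
            rw [map_mul, Complex.conj_conj, mul_comm]
          have hsub1 : (∑ n ∈ Finset.Icc (0 : ℤ) ((N : ℤ) - 2),
                Ψ n * (starRingEnd ℂ) (Ψ (n + 1)))
              = ∑ n ∈ Finset.Icc (0 : ℤ) ((N : ℤ) - 1),
                Ψ n * (starRingEnd ℂ) (Ψ (n + 1)) := by
            refine Finset.sum_subset ?_ ?_
            · intro n hn
              simp only [Finset.mem_Icc] at *
              omega
            · intro n hn hn'
              simp only [Finset.mem_Icc] at hn hn'
              have : n = (N : ℤ) - 1 := by omega
              subst this
              rw [show (N : ℤ) - 1 + 1 = (N : ℤ) by ring, hΨN]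
              simp
          have hsub2 : (∑ n ∈ S, Ψ n * (starRingEnd ℂ) (Ψ (n + 1)))
              = ∑ n ∈ Finset.Icc (0 : ℤ) ((N : ℤ) - 1),
                Ψ n * (starRingEnd ℂ) (Ψ (n + 1)) := by
            refine Finset.sum_subset ?_ ?_
            · intro n hn
              simp only [hSdef, Finset.mem_Icc] at *
              omega
            · intro n hn hn'
              simp only [hSdef, Finset.mem_Icc] at hn hn'
              have : n = 0 := by omega
              subst this
              rw [hΨ0]
              simp
          have hconj : (∑ n ∈ S, Ψ (n - 1) * (starRingEnd ℂ) (Ψ n))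
              = (starRingEnd ℂ) (∑ n ∈ S, Ψ (n + 1) * (starRingEnd ℂ) (Ψ n)) := by
            rw [hT2, hT1c, hsub1, hsub2]
          rw [hconj, Complex.conj_im]
          ring
  -- constancy via vanishing right derivative
  have hcont : ContinuousOn P (Set.Icc 0 T) :=
    fun x _ => ((hD x).continuousAt).continuousWithinAt
  have hder : ∀ x ∈ Set.Ico (0 : ℝ) T, HasDerivWithinAt P 0 (Set.Ici x) x := by
    intro x hx
    have := (hD x).hasDerivWithinAt (s := Set.Ici x)
    rwa [hzero x ⟨hx.1, le_of_lt hx.2⟩] at this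
  exact constant_of_has_deriv_right_zero hcont hder t ht
end
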